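/- arXiv:1811.06178 — 3 statements merged into one kernel-verified Lean document; each statement's English description precedes it below -/
import Mathlib

section
/- Let n ≥ 1 and let x, y, d ∈ [n] satisfy y > x + d and x > d. Then the 10-element set {x−d, x, x+d, x+2d, y−d, y, y+d, d, y−x−d, y−x} is 2-Schur-Ramsey: for every 2-colouring of this set there exist elements a, b, c of the set, all of the same colour, with a + b = c. -/
lemma schur_bool : ∀ (b0 b1 b2 b3 b4 b5 b6 b7 b8 b9 : Bool),
    (b7 = b0 ∧ b0 = b1) ∨ (b7 = b1 ∧ b1 = b2) ∨ (b7 = b2 ∧ b2 = b3) ∨ (b7 = b4 ∧ b4 = b5) ∨ (b7 = b5 ∧ b5 = b6) ∨ (b8 = b7 ∧ b7 = b9) ∨ (b8 = b1 ∧ b1 = b4) ∨ (b8 = b2 ∧ b2 = b5) ∨ (b8 = b3 ∧ b3 = b6) ∨ (b9 = b0 ∧ b0 = b4) ∨ (b9 = b1 ∧ b1 = b5) ∨ (b9 = b2 ∧ b2 = b6) := by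
  intro b0 b1 b2 b3 b4 b5 b6 b7 b8 b9
  cases b0 <;> cases b1 <;> cases b2 <;> cases b3 <;> cases b4 <;> cases b5 <;>
    cases b6 <;> cases b7 <;> cases b8 <;> cases b9 <;> simp

set_option maxHeartbeats 1000000 in
/-- the 10-element set {x−d, x, x+d, x+2d, y−d, y, y+d, d, y−x−d, y−x}
is 2-Schur-Ramsey. -/
theorem stmt_0 (n x y d : ℕ) (hn : 1 ≤ n)
    (hx : x ∈ Finset.Icc 1 n) (hy : y ∈ Finset.Icc 1 n) (hd : d ∈ Finset.Icc 1 n)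
    (hyxd : y > x + d) (hxd : x > d)
    (f : ℕ → Bool) :
    ∃ a ∈ ({x - d, x, x + d, x + 2*d, y - d, y, y + d, d, y - x - d, y - x} : Finset ℕ),
    ∃ b ∈ ({x - d, x, x + d, x + 2*d, y - d, y, y + d, d, y - x - d, y - x} : Finset ℕ),
    ∃ c ∈ ({x - d, x, x + d, x + 2*d, y - d, y, y + d, d, y - x - d, y - x} : Finset ℕ),
      f a = f b ∧ f b = f c ∧ a + b = c := by
  simp only [Finset.mem_Icc] at hx hy hd
  rcases schur_bool (f (x-d)) (f x) (f (x+d)) (f (x+2*d)) (f (y-d)) (f y) (f (y+d)) (f d) (f (y-x-d)) (f (y-x)) with h|h|h|h|h|h|h|h|h|h|h|h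
  · exact ⟨d, by simp, x - d, by simp, x, by simp, h.1, h.2, by omega⟩
  · exact ⟨d, by simp, x, by simp, x + d, by simp, h.1, h.2, by omega⟩
  · exact ⟨d, by simp, x + d, by simp, x + 2*d, by simp, h.1, h.2, by omega⟩
  · exact ⟨d, by simp, y - d, by simp, y, by simp, h.1, h.2, by omega⟩
  · exact ⟨d, by simp, y, by simp, y + d, by simp, h.1, h.2, by omega⟩
  · exact ⟨y - x - d, by simp, d, by simp, y - x, by simp, h.1, h.2, by omega⟩
  · exact ⟨y - x - d, by simp, x, by simp, y - d, by simp, h.1, h.2, by omega⟩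
  · exact ⟨y - x - d, by simp, x + d, by simp, y, by simp, h.1, h.2, by omega⟩
  · exact ⟨y - x - d, by simp, x + 2*d, by simp, y + d, by simp, h.1, h.2, by omega⟩
  · exact ⟨y - x, by simp, x - d, by simp, y - d, by simp, h.1, h.2, by omega⟩
  · exact ⟨y - x, by simp, x, by simp, y, by simp, h.1, h.2, by omega⟩
  · exact ⟨y - x, by simp, x + d, by simp, y + d, by simp, h.1, h.2, by omega⟩
end

section
/- Suppose A ⊆ [n], ε > 0, and there are at least ε·n values d ∈ [n] such that A contains at least ε·n 4APs with common difference d. Then the number of triples (d, s−d, s) of positive integers such that d lies in D_ε(A) and s = y − x where (x−d, x, x+d, x+2d) and (y−d, y, y+d) arise from two distinct 4APs of A with common difference d (as described) is at least ε²n²/4, provided n is sufficiently large. In particular, A determines at least ε²n²/4 distinct Schur triples of the form (d, s−d, s). -/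
/-- `x, x+d, x+2d, x+3d` all lie in `A`. -/
def is4AP (A : Finset ℕ) (x d : ℕ) : Prop :=
  x ∈ A ∧ x + d ∈ A ∧ x + 2 * d ∈ A ∧ x + 3 * d ∈ A

open Classical in
/-- Number of 4APs in `A` with common difference `d`. -/
noncomputable def ap4Count (n : ℕ) (A : Finset ℕ) (d : ℕ) : ℕ :=
  ((Finset.Icc 1 n).filter (fun x => is4AP A x d)).card

open Classical in
/-- Popular common differences. -/
noncomputable def popularDiffs (n : ℕ) (A : Finset ℕ) (ε : ℝ) : Finset ℕ :=
  (Finset.Icc 1 n).filter (fun d => ε * n ≤ (ap4Count n A d : ℝ))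

open Classical in
/-- The pairs `(d, s)` encoding the Schur triples `(d, s−d, s)`:
`d` is a popular difference and `s = (b − a) + d` where `a < b` are first terms of two
distinct 4APs of `A` with common difference `d`. -/
noncomputable def schurPairs (n : ℕ) (A : Finset ℕ) (ε : ℝ) : Finset (ℕ × ℕ) :=
  ((Finset.Icc 1 n) ×ˢ (Finset.Icc 1 (2 * n))).filter
    (fun t => t.1 ∈ popularDiffs n A ε ∧
      ∃ a ∈ Finset.Icc 1 n, ∃ b ∈ Finset.Icc 1 n, a < b ∧
        is4AP A a t.1 ∧ is4AP A b t.1 ∧ t.2 = (b - a) + t.1)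

/-- at least `ε²n²/4` Schur triples `(d, s−d, s)` arise from pairs of
4APs of `A` with popular common difference. -/
theorem stmt_8 (ε : ℝ) (hε : 0 < ε) :
    ∃ n₀ : ℕ, ∀ n : ℕ, n₀ ≤ n → ∀ A ⊆ Finset.Icc 1 n,
      ε * n ≤ ((popularDiffs n A ε).card : ℝ) →
      ε ^ 2 * n ^ 2 / 4 ≤ ((schurPairs n A ε).card : ℝ) ∧
        ∀ t ∈ schurPairs n A ε, t.1 + (t.2 - t.1) = t.2 := by
  classical
  obtain ⟨m, hm⟩ := exists_nat_gt (2 / ε)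
  refine ⟨m, fun n hn A hA hP => ?_⟩
  have hn2 : (2 : ℝ) ≤ ε * n := by
    have h1 : (2:ℝ)/ε < (n:ℝ) := lt_of_lt_of_le hm (by exact_mod_cast hn)
    have h2 : (2:ℝ) ≤ (n:ℝ) * ε := (div_le_iff₀ hε).mp h1.le
    linarith [mul_comm ε (n:ℝ)]
  constructor
  · -- main counting bound
    set X : ℕ → Finset ℕ := fun d => (Finset.Icc 1 n).filter (fun x => is4AP A x d)
      with hXdef
    have hcount : ∀ d, (ap4Count n A d : ℝ) = ((X d).card : ℝ) := by
      intro d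
      simp only [ap4Count, hXdef, Finset.filter_congr_decidable]
    have hXcard : ∀ d ∈ popularDiffs n A ε, (2:ℝ) ≤ ((X d).card : ℝ) := by
      intro d hd
      simp only [popularDiffs, Finset.mem_filter] at hd
      calc (2:ℝ) ≤ ε * n := hn2
        _ ≤ (ap4Count n A d : ℝ) := hd.2
        _ = _ := hcount d
    have hXεn : ∀ d ∈ popularDiffs n A ε, ε * n ≤ ((X d).card : ℝ) := by
      intro d hd
      simp only [popularDiffs, Finset.mem_filter] at hd
      calc ε * n ≤ (ap4Count n A d : ℝ) := hd.2
        _ = _ := hcount d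
    have hXne : ∀ d ∈ popularDiffs n A ε, (X d).Nonempty := by
      intro d hd
      rw [← Finset.card_pos]
      have := hXcard d hd
      exact_mod_cast lt_of_lt_of_le (by norm_num : (0:ℝ) < 2) this
    set a : ℕ → ℕ := fun d => if h : (X d).Nonempty then (X d).min' h else 0 with hadef
    have ha_mem : ∀ d ∈ popularDiffs n A ε, a d ∈ X d := by
      intro d hd
      simp only [hadef, dif_pos (hXne d hd)]
      exact (X d).min'_mem _
    have ha_min : ∀ d ∈ popularDiffs n A ε, ∀ b ∈ X d, a d ≤ b := by
      intro d hd b hb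
      simp only [hadef, dif_pos (hXne d hd)]
      exact (X d).min'_le b hb
    set S : Finset (ℕ × ℕ) :=
      (popularDiffs n A ε).biUnion
        (fun d => ((X d).erase (a d)).image (fun b => (d, (b - a d) + d))) with hSdef
    have hdisj : ∀ x ∈ popularDiffs n A ε, ∀ y ∈ popularDiffs n A ε, x ≠ y →
        Disjoint (((X x).erase (a x)).image (fun b => (x, (b - a x) + x)))
          (((X y).erase (a y)).image (fun b => (y, (b - a y) + y))) := by
      intro x hx y hy hxy
      simp only [Finset.disjoint_left, Finset.mem_image]
      rintro p ⟨b, _, rfl⟩ ⟨c, _, hc⟩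
      exact hxy (congrArg Prod.fst hc).symm
    have hSsub : S ⊆ schurPairs n A ε := by
      intro p hp
      simp only [hSdef, Finset.mem_biUnion, Finset.mem_image, Finset.mem_erase] at hp
      obtain ⟨d, hd, b, ⟨hbne, hbX⟩, hpeq⟩ := hp
      have hdIcc : d ∈ Finset.Icc 1 n := (Finset.mem_filter.mp hd).1
      have haX := ha_mem d hd
      have hab : a d < b := lt_of_le_of_ne (ha_min d hd b hbX) (Ne.symm hbne)
      have haIcc : a d ∈ Finset.Icc 1 n := (Finset.mem_filter.mp haX).1
      have hbIcc : b ∈ Finset.Icc 1 n := (Finset.mem_filter.mp hbX).1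
      have ha4 : is4AP A (a d) d := (Finset.mem_filter.mp haX).2
      have hb4 : is4AP A b d := (Finset.mem_filter.mp hbX).2
      subst hpeq
      simp only [schurPairs, Finset.mem_filter, Finset.mem_product]
      have h1d : 1 ≤ d := (Finset.mem_Icc.mp hdIcc).1
      have hdn : d ≤ n := (Finset.mem_Icc.mp hdIcc).2
      have hbn : b ≤ n := (Finset.mem_Icc.mp hbIcc).2
      exact ⟨⟨hdIcc, Finset.mem_Icc.mpr ⟨by omega, by omega⟩⟩, hd,
        a d, haIcc, b, hbIcc, hab, ha4, hb4, rfl⟩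
    have hScard : (S.card : ℝ) =
        ∑ d ∈ popularDiffs n A ε, (((X d).erase (a d)).card : ℝ) := by
      rw [hSdef, Finset.card_biUnion hdisj]
      push_cast
      refine Finset.sum_congr rfl (fun d hd => ?_)
      congr 1
      apply Finset.card_image_of_injOn
      intro b hb c hc h
      have hab : a d ≤ b := ha_min d hd b (Finset.mem_of_mem_erase hb)
      have hac : a d ≤ c := ha_min d hd c (Finset.mem_of_mem_erase hc)
      have h2 := congrArg Prod.snd h
      simp only at h2
      omega
    have hlow : ∀ d ∈ popularDiffs n A ε,
        ε * n - 1 ≤ (((X d).erase (a d)).card : ℝ) := by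
      intro d hd
      rw [Finset.card_erase_of_mem (ha_mem d hd)]
      have h2 := hXcard d hd
      have hε' := hXεn d hd
      have h1 : 1 ≤ (X d).card := by exact_mod_cast le_trans (by norm_num : (1:ℝ) ≤ 2) h2
      rw [Nat.cast_sub h1]
      push_cast
      linarith
    have hsum : ((popularDiffs n A ε).card : ℝ) * (ε * n - 1) ≤ (S.card : ℝ) := by
      rw [hScard]
      have := Finset.card_nsmul_le_sum (popularDiffs n A ε)
        (fun d => (((X d).erase (a d)).card : ℝ)) (ε * n - 1) hlow
      simpa [nsmul_eq_mul] using this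
    have hfinal : (S.card : ℝ) ≤ ((schurPairs n A ε).card : ℝ) := by
      exact_mod_cast Finset.card_le_card hSsub
    have hεn1 : (1:ℝ) ≤ ε * n - 1 := by linarith
    nlinarith [mul_le_mul hP (le_refl (ε * n - 1)) (by linarith) (by positivity : (0:ℝ) ≤ ((popularDiffs n A ε).card : ℝ))]
  · intro t ht
    simp only [schurPairs, Finset.mem_filter] at ht
    obtain ⟨_, b, _, c, _, hbc, _, _, hs⟩ := ht.2
    omega
end

section
/- Schur's theorem (finite version): for every r ≥ 1 there exists N such that for every n ≥ N and every r-colouring of [n] there exist x, y, z ∈ [n] of the same colour with x + y = z. -/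
lemma triangle_ramsey : ∀ r : ℕ, ∃ N : ℕ, ∀ (c : ℕ → ℕ → Fin r) (S : Finset ℕ),
    N ≤ S.card → ∃ a ∈ S, ∃ b ∈ S, ∃ k ∈ S,
      a < b ∧ b < k ∧ c a b = c b k ∧ c a b = c a k := by
  intro r
  induction r with
  | zero =>
    refine ⟨1, fun c S hS => ?_⟩
    obtain ⟨a, ha⟩ := Finset.card_pos.mp hS
    exact Fin.elim0 (c a a)
  | succ r ih =>
    obtain ⟨N₀, ih⟩ := ih
    set N := max N₀ 2 with hN
    refine ⟨(r + 1) * N + 2, fun c S hS => ?_⟩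
    have hSne : S.Nonempty := Finset.card_pos.mp (by omega)
    set v := S.min' hSne with hv
    have hvS : v ∈ S := S.min'_mem hSne
    set T := S.erase v with hT
    have hTcard : (r + 1) * N + 1 ≤ T.card := by
      have h := Finset.card_erase_of_mem hvS
      rw [← hT] at h
      omega
    -- pigeonhole
    obtain ⟨cl, -, hcl⟩ := Finset.exists_lt_card_fiber_of_mul_lt_card_of_maps_to
      (s := T) (t := (Finset.univ : Finset (Fin (r + 1)))) (f := fun t => c v t) (n := N)
      (fun a _ => Finset.mem_univ _) (by rw [Finset.card_univ, Fintype.card_fin]; omega)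
    set U := T.filter (fun t => c v t = cl) with hU
    have hUS : ∀ a ∈ U, a ∈ S := fun a ha =>
      Finset.mem_of_mem_erase (Finset.mem_filter.mp ha).1
    have hUv : ∀ a ∈ U, v < a := by
      intro a ha
      have h1 := Finset.mem_filter.mp ha
      have h2 : a ≠ v := Finset.ne_of_mem_erase h1.1
      exact lt_of_le_of_ne (S.min'_le a (hUS a ha)) (Ne.symm h2)
    have hUcl : ∀ a ∈ U, c v a = cl := fun a ha => (Finset.mem_filter.mp ha).2
    by_cases hpair : ∃ a ∈ U, ∃ b ∈ U, a < b ∧ c a b = cl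
    · obtain ⟨a, ha, b, hb, hab, habc⟩ := hpair
      exact ⟨v, hvS, a, hUS a ha, b, hUS b hb, hUv a ha, hab, by
        rw [hUcl a ha, habc], by rw [hUcl a ha, hUcl b hb]⟩
    · push_neg at hpair
      rcases Nat.eq_zero_or_pos r with rfl | hr0
      · -- one colour: any edge inside U is forced to be cl, contradiction
        have h2 : 1 < U.card := lt_of_le_of_lt (by omega) hcl
        obtain ⟨a, ha, b, hb, hab⟩ := Finset.one_lt_card.mp h2
        rcases lt_or_gt_of_ne hab with h | h
        · have h1 := (c a b).isLt; have h2 := cl.isLt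
          exact absurd (Fin.ext (by omega)) (hpair a ha b hb h)
        · have h1 := (c b a).isLt; have h2 := cl.isLt
          exact absurd (Fin.ext (by omega)) (hpair b hb a ha h)
      · -- recolour with r colours and use the induction hypothesis
        set e := finSuccEquiv' cl with he
        set c' : ℕ → ℕ → Fin r := fun a b => (e (c a b)).getD ⟨0, hr0⟩ with hc'
        have key : ∀ a ∈ U, ∀ b ∈ U, a < b → ∃ j, e (c a b) = some j ∧ c' a b = j := by
          intro a ha b hb h
          have hne : c a b ≠ cl := hpair a ha b hb h
          have : e (c a b) ≠ none := by
            intro hcontra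
            apply hne
            apply e.injective
            rw [hcontra, he]
            exact (finSuccEquiv'_at cl).symm
          obtain ⟨j, hj⟩ := Option.ne_none_iff_exists'.mp this
          exact ⟨j, hj, by rw [hc']; simp [hj]⟩
        obtain ⟨a, ha, b, hb, k, hk, hab, hbk, h1, h2⟩ :=
          ih c' U (by have : N₀ ≤ N := le_max_left _ _; omega)
        obtain ⟨j1, hj1, hj1'⟩ := key a ha b hb hab
        obtain ⟨j2, hj2, hj2'⟩ := key b hb k hk hbk
        obtain ⟨j3, hj3, hj3'⟩ := key a ha k hk (lt_trans hab hbk)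
        refine ⟨a, hUS a ha, b, hUS b hb, k, hUS k hk, hab, hbk, ?_, ?_⟩
        · apply e.injective
          rw [hj1, hj2, Option.some.injEq, ← hj1', ← hj2']; exact h1
        · apply e.injective
          rw [hj1, hj3, Option.some.injEq, ← hj1', ← hj3']; exact h2

/-- Schur's theorem, finite version. -/
theorem stmt_9 (r : ℕ) (hr : 1 ≤ r) :
    ∃ N : ℕ, ∀ n : ℕ, N ≤ n → ∀ f : ℕ → Fin r,
      ∃ x ∈ Finset.Icc 1 n, ∃ y ∈ Finset.Icc 1 n, ∃ z ∈ Finset.Icc 1 n,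
        f x = f y ∧ f y = f z ∧ x + y = z := by
  obtain ⟨N, hN⟩ := triangle_ramsey r
  refine ⟨N, fun n hn f => ?_⟩
  obtain ⟨a, ha, b, hb, k, hk, hab, hbk, h1, h2⟩ :=
    hN (fun i j => f (j - i)) (Finset.Icc 1 n) (by rw [Nat.card_Icc]; omega)
  rw [Finset.mem_Icc] at ha hb hk
  refine ⟨b - a, ?_, k - b, ?_, k - a, ?_, ?_, ?_, by omega⟩
  · rw [Finset.mem_Icc]; omega
  · rw [Finset.mem_Icc]; omega
  · rw [Finset.mem_Icc]; omega
  · exact h1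
  · rw [← h1]; exact h2
end
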